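/- Let u, v be Lyndon words with u < v, |u| ≥ 2, and let (u₁, u₂) be the Shirshov decomposition of u. Then exactly one of the following holds: (1) the Shirshov decomposition of uv is (u, v) and u₂ ≥ v; or (2) u₂ < v and the Shirshov decomposition of uv is (u₁', u₁''u₂v) for some factorization u₁ = u₁'u₁'' (with u₁'' possibly empty). -/
import Mathlib


/-- A nonempty word `u` over a totally ordered alphabet is a Lyndon word if for every
factorization `u = u₁ ++ u₂` into nonempty words one has `u < u₂` lexicographically. -/
def IsLyndon {α : Type*} [LinearOrder α] (u : List α) : Prop :=
  u ≠ [] ∧ ∀ u₁ u₂ : List α, u₁ ≠ [] → u₂ ≠ [] → u = u₁ ++ u₂ → u < u₂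

/-- `ShirshovDecomp u v w` means `u = v ++ w` where `w` is the longest proper right factor of
`u` which is a Lyndon word (and `v` is nonempty). -/
def ShirshovDecomp {α : Type*} [LinearOrder α] (u v w : List α) : Prop :=
  u = v ++ w ∧ v ≠ [] ∧ w ≠ [] ∧ IsLyndon w ∧
    ∀ w' : List α, w' <:+ u → w' ≠ u → IsLyndon w' → w'.length ≤ w.length

namespace ShirshovAux

variable {α : Type*} [LinearOrder α]

/-- L1: a proper prefix is lex-smaller. -/
lemma lt_append_right (l : List α) {t : List α} (ht : t ≠ []) : l < l ++ t := by
  induction l with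
  | nil =>
    cases t with
    | nil => exact absurd rfl ht
    | cons a t => exact List.Lex.nil
  | cons a l ih => exact List.Lex.cons ih

/-- L2: if `s < t` and `s` is not a prefix of `t`, appending anything preserves `<`. -/
lemma append_lt_append {s t : List α} (h : s < t) (hp : ¬ s <+: t) (a b : List α) :
    s ++ a < t ++ b := by
  induction h with
  | nil => exact absurd (List.nil_prefix) hp
  | @rel x l₁ y l₂ hxy => exact List.Lex.rel hxy
  | @cons x l₁ l₂ h ih =>
    refine List.Lex.cons (ih ?_)
    intro hpre
    exact hp (List.cons_prefix_cons.mpr ⟨rfl, hpre⟩)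

/-- shorter suffix of the same list is a suffix of a longer one -/
lemma suffix_of_suffix_of_length_le {s t l : List α} (hs : s <:+ l) (ht : t <:+ l)
    (h : s.length ≤ t.length) : s <:+ t := by
  obtain ⟨a, ha⟩ := hs
  obtain ⟨b, hb⟩ := ht
  have hs' : l.drop a.length = s := by rw [← ha]; simp
  have ht' : l.drop b.length = t := by rw [← hb]; simp
  have hla : l.length = a.length + s.length := by rw [← ha]; simp
  have hlb : l.length = b.length + t.length := by rw [← hb]; simp
  have hab : b.length ≤ a.length := by omega
  have key : t.drop (a.length - b.length) = s := by
    rw [← ht', List.drop_drop]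
    rw [show b.length + (a.length - b.length) = a.length by omega, hs']
  exact key ▸ List.drop_suffix _ _

set_option linter.unusedSectionVars false

/-- D: a suffix of `l₁ ++ l₂` at least as long as `l₂` splits off a suffix of `l₁`. -/
lemma suffix_append_decomp {w l₁ l₂ : List α} (hw : w <:+ l₁ ++ l₂)
    (h : l₂.length ≤ w.length) : ∃ s, s <:+ l₁ ∧ w = s ++ l₂ := by
  obtain ⟨a, ha⟩ := hw
  have hlen : (l₁ ++ l₂).length = a.length + w.length := by rw [← ha]; simp
  have hal : a.length ≤ l₁.length := by simp at hlen; omega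
  refine ⟨l₁.drop a.length, List.drop_suffix _ _, ?_⟩
  have : (l₁ ++ l₂).drop a.length = w := by rw [← ha]; simp
  rw [← this, List.drop_append_of_le_length hal]

/-- B0 : if `u` is smaller than the Lyndon word `v` then `u ++ v < v`. -/
lemma append_lt_self {u v : List α} (hune : u ≠ []) (hv : IsLyndon v) (huv : u < v) :
    u ++ v < v := by
  by_cases hp : u <+: v
  · obtain ⟨t, ht⟩ := hp
    have htne : t ≠ [] := by rintro rfl; simp at ht; subst ht; exact absurd huv (lt_irrefl _)
    have : v < t := hv.2 u t hune htne ht.symm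
    calc u ++ v < u ++ t := List.Lex.append_left _ this u
    _ = v := ht
  · have := append_lt_append huv hp v []
    simpa using this

/-- B : concatenation of Lyndon words `u < v` is Lyndon. -/
lemma isLyndon_append {u v : List α} (hu : IsLyndon u) (hv : IsLyndon v) (huv : u < v) :
    IsLyndon (u ++ v) := by
  refine ⟨by simp [hu.1], ?_⟩
  rintro a b ha hb hab
  have hbsuf : b <:+ u ++ v := ⟨a, hab.symm⟩
  rcases le_or_gt b.length v.length with hle | hlt
  · -- b is a suffix of v
    have hbv : b <:+ v := suffix_of_suffix_of_length_le hbsuf (List.suffix_append u v) hle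
    rcases eq_or_ne b v with rfl | hne
    · exact append_lt_self hu.1 hv huv
    · have hvb : v < b := by
        obtain ⟨c, hc⟩ := hbv
        have hcne : c ≠ [] := by rintro rfl; simp at hc; exact hne hc
        exact hv.2 c b hcne hb hc.symm
      exact lt_trans (append_lt_self hu.1 hv huv) hvb
  · -- b = s ++ v with s a nonempty proper suffix of u
    obtain ⟨s, hsu, rfl⟩ := suffix_append_decomp hbsuf (le_of_lt hlt)
    have hsne : s ≠ [] := by rintro rfl; simp at hlt
    have hslen : s.length < u.length := by
      have := congrArg List.length hab
      simp at this
      have hane : 0 < a.length := List.length_pos_iff.mpr ha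
      omega
    have hsu' : s ≠ u := by rintro rfl; omega
    obtain ⟨c, hc⟩ := hsu
    have hcne : c ≠ [] := by rintro rfl; simp at hc; exact hsu' hc
    have hus : u < s := hu.2 c s hcne hsne hc.symm
    have hnp : ¬ u <+: s := fun hp => by
      have := hp.length_le; omega
    exact append_lt_append hus hnp v v

/-- A suffix of the same length is equal. -/
lemma suffix_len_lt {s u : List α} (h : s <:+ u) (hne : s ≠ u) : s.length < u.length := by
  rcases lt_or_eq_of_le h.length_le with h' | h'
  · exact h'
  · exact absurd (List.IsSuffix.eq_of_length h h') hne

/-- A : `u₂` is the lex-least nonempty proper suffix of `u`. -/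
lemma shirshov_min {u u₁ u₂ : List α} (hu : IsLyndon u) (hSd : ShirshovDecomp u u₁ u₂) :
    ∀ s : List α, s <:+ u → s ≠ u → s ≠ [] → u₂ ≤ s := by
  classical
  obtain ⟨hequ, h1ne, h2ne, h2L, hmax⟩ := hSd
  have hlen1 : 0 < u₁.length := List.length_pos_iff.mpr h1ne
  have hlen2 : 0 < u₂.length := List.length_pos_iff.mpr h2ne
  have hulen : u.length = u₁.length + u₂.length := by rw [hequ]; simp
  have hTne : ((Finset.Ioo 0 u.length).image (u.drop ·)).Nonempty :=
    ⟨u.drop 1, Finset.mem_image.mpr ⟨1, by simp [Finset.mem_Ioo]; omega, rfl⟩⟩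
  set m := ((Finset.Ioo 0 u.length).image (u.drop ·)).min' hTne with hm
  have hmem : m ∈ (Finset.Ioo 0 u.length).image (u.drop ·) := Finset.min'_mem _ hTne
  obtain ⟨n, hn, hdn⟩ := Finset.mem_image.mp hmem
  simp [Finset.mem_Ioo] at hn
  have hmlen : m.length = u.length - n := by rw [← hdn]; simp
  have hmne : m ≠ [] := by
    intro h; rw [h] at hmlen; simp at hmlen; omega
  have hmu : m ≠ u := by
    intro h; rw [h] at hmlen; omega
  have hmsuf : m <:+ u := hdn ▸ List.drop_suffix n u
  -- m is ≤ every nonempty proper suffix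
  have hmin : ∀ s : List α, s <:+ u → s ≠ u → s ≠ [] → m ≤ s := by
    intro s hs hsu hsne
    have hslen : s.length < u.length := suffix_len_lt hs hsu
    have hslen0 : 0 < s.length := List.length_pos_iff.mpr hsne
    have hds : u.drop (u.length - s.length) = s := by
      obtain ⟨c, rfl⟩ := hs; simp
    apply Finset.min'_le
    exact Finset.mem_image.mpr ⟨u.length - s.length, by simp [Finset.mem_Ioo]; omega, hds⟩
  -- m is Lyndon
  have hmL : IsLyndon m := by
    refine ⟨hmne, ?_⟩
    rintro a b ha hb hab
    have hbm : b <:+ m := ⟨a, hab.symm⟩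
    have hblen : b.length < m.length := by
      have := congrArg List.length hab
      have := List.length_pos_iff.mpr ha
      simp at *; omega
    have hbu : b <:+ u := hbm.trans hmsuf
    have hbnu : b ≠ u := by
      intro h; rw [h] at hblen; have := hmsuf.length_le; omega
    have := hmin b hbu hbnu hb
    exact lt_of_le_of_ne this (by intro h; rw [h] at hblen; omega)
  -- m = u₂
  have hmlen2 : m.length ≤ u₂.length := hmax m hmsuf hmu hmL
  have h2suf : u₂ <:+ u := hequ ▸ ⟨u₁, rfl⟩
  have h2nu : u₂ ≠ u := by intro h; rw [← h] at hulen; omega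
  have hmsuf2 : m <:+ u₂ := suffix_of_suffix_of_length_le hmsuf h2suf hmlen2
  have hm2 : m = u₂ := by
    by_contra hne
    obtain ⟨c, hc⟩ := hmsuf2
    have hcne : c ≠ [] := by rintro rfl; simp at hc; exact hne hc
    have h2m : u₂ < m := h2L.2 c m hcne hmne hc.symm
    have hm2' : m ≤ u₂ := hmin u₂ h2suf h2nu h2ne
    exact absurd (lt_of_le_of_lt hm2' h2m) (lt_irrefl _)
  intro s hs hsu hsne
  exact hm2 ▸ hmin s hs hsu hsne

/-- C : existence of a longest proper Lyndon suffix, given one proper Lyndon suffix. -/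
lemma exists_max_lyndon {w0 u : List α} (h : w0 <:+ u) (hne : w0 ≠ u) (hL : IsLyndon w0) :
    ∃ w : List α, w <:+ u ∧ w ≠ u ∧ IsLyndon w ∧ w0.length ≤ w.length ∧
      ∀ w' : List α, w' <:+ u → w' ≠ u → IsLyndon w' → w'.length ≤ w.length := by
  classical
  have hex : ∃ n, 0 < n ∧ IsLyndon (u.drop n) := by
    refine ⟨u.length - w0.length, ?_, ?_⟩
    · have := suffix_len_lt h hne; omega
    · have : u.drop (u.length - w0.length) = w0 := by obtain ⟨c, rfl⟩ := h; simp
      rw [this]; exact hL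
  set n := Nat.find hex with hn
  obtain ⟨hn0, hnL⟩ := Nat.find_spec hex
  have hnlen : n < u.length := by
    by_contra hcon
    have : u.drop n = [] := List.drop_eq_nil_of_le (by omega)
    exact hnL.1 this
  have hwlen : (u.drop n).length = u.length - n := by simp
  have hwu : u.drop n ≠ u := by
    intro hcon
    have := congrArg List.length hcon
    rw [hwlen] at this; omega
  have hmax : ∀ w' : List α, w' <:+ u → w' ≠ u → IsLyndon w' → w'.length ≤ (u.drop n).length := by
    intro w' hw' hw'u hw'L
    have hw'len : w'.length < u.length := suffix_len_lt hw' hw'u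
    have hd : u.drop (u.length - w'.length) = w' := by obtain ⟨c, rfl⟩ := hw'; simp
    have hfind : n ≤ u.length - w'.length := by
      apply Nat.find_min' hex
      constructor
      · omega
      · rw [hd]; exact hw'L
    rw [hwlen]
    have hw'0 : 0 < w'.length := List.length_pos_iff.mpr hw'L.1
    omega
  exact ⟨u.drop n, List.drop_suffix n u, hwu, hnL,
    hmax w0 h hne hL, hmax⟩

end ShirshovAux

open ShirshovAux

/-- Let `u < v` be Lyndon words with `|u| ≥ 2` and Shirshov decomposition `u = u₁u₂`. Then
exactly one of the following holds: (1) the Shirshov decomposition of `uv` is `(u, v)` and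
`u₂ ≥ v`; or (2) `u₂ < v` and the Shirshov decomposition of `uv` is `(u₁', u₁''u₂v)` for some
factorization `u₁ = u₁'u₁''` (with `u₁''` possibly empty). -/
theorem shirshov_of_concat {α : Type*} [LinearOrder α] (u v u₁ u₂ : List α)
    (hu : IsLyndon u) (hv : IsLyndon v) (huv : u < v) (hlen : 2 ≤ u.length)
    (hSd : ShirshovDecomp u u₁ u₂) :
    Xor' (ShirshovDecomp (u ++ v) u v ∧ v ≤ u₂)
      (u₂ < v ∧ ∃ u₁' u₁'' : List α, u₁ = u₁' ++ u₁'' ∧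
        ShirshovDecomp (u ++ v) u₁' (u₁'' ++ u₂ ++ v)) := by
  have hminA := shirshov_min hu hSd
  obtain ⟨hequ, h1ne, h2ne, h2L, hmaxu⟩ := hSd
  rcases le_or_gt v u₂ with hve | hlt
  · -- Case (1)
    left
    refine ⟨⟨⟨rfl, hu.1, hv.1, hv, ?_⟩, hve⟩, fun hB => absurd hB.1 (not_lt.mpr hve)⟩
    intro w' hw' hneq hw'L
    by_contra hcon
    push_neg at hcon
    obtain ⟨s, hsu, rfl⟩ := suffix_append_decomp hw' (le_of_lt hcon)
    have hsne : s ≠ [] := by rintro rfl; simp at hcon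
    have hsnu : s ≠ u := by rintro rfl; exact hneq rfl
    have hv_le_s : v ≤ s := le_trans hve (hminA s hsu hsnu hsne)
    have hlt1 : s ++ v < v := hw'L.2 s v hsne hv.1 rfl
    have hlt2 : v < s ++ v := by
      by_cases hp : v <+: s
      · obtain ⟨r, hr⟩ := hp
        rw [← hr, List.append_assoc]
        exact lt_append_right v (by simp [hv.1])
      · have hvs : v < s := lt_of_le_of_ne hv_le_s (by rintro rfl; exact hp List.prefix_rfl)
        have := append_lt_append hvs hp [] v
        simpa using this
    exact absurd (lt_trans hlt1 hlt2) (lt_irrefl _)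
  · -- Case (2)
    right
    have h2vL : IsLyndon (u₂ ++ v) := isLyndon_append h2L hv hlt
    have h2vsuf : u₂ ++ v <:+ u ++ v := ⟨u₁, by rw [hequ, List.append_assoc]⟩
    have h2vne : u₂ ++ v ≠ u ++ v := by
      intro h
      have := congrArg List.length h
      have h1len : 0 < u₁.length := List.length_pos_iff.mpr h1ne
      have : u.length = u₁.length + u₂.length := by rw [hequ]; simp
      simp at *; omega
    obtain ⟨w, hwsuf, hwne, hwL, hwlen, hwmax⟩ := exists_max_lyndon h2vsuf h2vne h2vL
    have hwsuf' : w <:+ u₁ ++ (u₂ ++ v) := by rwa [hequ, List.append_assoc] at hwsuf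
    have hwlen' : (u₂ ++ v).length ≤ w.length := hwlen
    obtain ⟨s, hsu₁, hws⟩ := suffix_append_decomp hwsuf' hwlen'
    obtain ⟨u₁', h₁'⟩ := hsu₁
    have hkey : s ++ u₂ ++ v = w := by rw [hws, List.append_assoc]
    have h₁'ne : u₁' ≠ [] := by
      rintro rfl
      simp at h₁'
      apply hwne
      rw [hws, h₁', hequ, List.append_assoc]
    refine ⟨⟨hlt, u₁', s, h₁'.symm, ?_, h₁'ne, ?_, ?_, ?_⟩, fun hA => absurd hlt (not_lt.mpr hA.2)⟩
    · rw [hequ, ← h₁']; simp [List.append_assoc]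
    · rw [hkey]; exact hwL.1
    · rw [hkey]; exact hwL
    · intro w'' h1 h2 h3
      rw [hkey]
      exact hwmax w'' h1 h2 h3
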